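/- Let α₀,α₁,α₂,α₃,α₄ be real parameters with α₃ = α₄. Let I ⊆ (0,1) be an open interval containing 1/2 that is symmetric under t ↦ 1−t, and let y, z : I → ℝ be differentiable functions solving the Hamiltonian system (9) with y(1/2) = 1/2 and z(1/2) = 0. Then for all t ∈ I: y(1−t) = 1 − y(t) and z(1−t) = −z(t); i.e., (y,z) is a symmetric solution of the Bäcklund transformation σ₁. -/

import Mathlib

/-- `(y, z)` is a (differentiable) real solution of the Hamiltonian system (9) with
parameters `(a0, a1, a2, a3, a4)` on the set `I ⊆ ℝ`. -/
def IsRealHamSol (a0 a1 a2 a3 a4 : ℝ) (I : Set ℝ) (y z : ℝ → ℝ) : Prop :=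
  ∀ t ∈ I, DifferentiableAt ℝ y t ∧ DifferentiableAt ℝ z t ∧
    t * (t - 1) * deriv y t =
      2 * y t * (y t - 1) * (y t - t) * z t - (a0 - 1) * y t * (y t - 1)
        - a3 * y t * (y t - t) - a4 * (y t - 1) * (y t - t) ∧
    t * (t - 1) * deriv z t =
      -(y t * (y t - 1) + (y t - 1) * (y t - t) + y t * (y t - t)) * z t ^ 2
        + ((2 * y t - 1) * (a0 - 1) + (2 * y t - t) * a3 + (2 * y t - t - 1) * a4) * z t
        - (a1 + a2) * a2

/-- The vector field of the (autonomized) Hamiltonian system (9). -/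
noncomputable def sigma1Field (a0 a1 a2 a3 a4 : ℝ) : ℝ × ℝ × ℝ → ℝ × ℝ × ℝ := fun x =>
  (1,
   (2 * x.2.1 * (x.2.1 - 1) * (x.2.1 - x.1) * x.2.2 - (a0 - 1) * x.2.1 * (x.2.1 - 1)
      - a3 * x.2.1 * (x.2.1 - x.1) - a4 * (x.2.1 - 1) * (x.2.1 - x.1)) / (x.1 * (x.1 - 1)),
   (-(x.2.1 * (x.2.1 - 1) + (x.2.1 - 1) * (x.2.1 - x.1) + x.2.1 * (x.2.1 - x.1)) * x.2.2 ^ 2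
      + ((2 * x.2.1 - 1) * (a0 - 1) + (2 * x.2.1 - x.1) * a3 + (2 * x.2.1 - x.1 - 1) * a4)
          * x.2.2
      - (a1 + a2) * a2) / (x.1 * (x.1 - 1)))

lemma sigma1Field_contDiffAt (a0 a1 a2 a3 a4 : ℝ) (x : ℝ × ℝ × ℝ)
    (h : x.1 * (x.1 - 1) ≠ 0) : ContDiffAt ℝ 1 (sigma1Field a0 a1 a2 a3 a4) x := by
  unfold sigma1Field
  fun_prop (disch := assumption)

/-- **Symmetric solution of σ₁.** Let `α₃ = α₄`, let `I ⊆ (0,1)` be an open interval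
containing `1/2`, symmetric under `t ↦ 1 - t`, and let `(y, z)` solve the Hamiltonian
system (9) on `I` with `y(1/2) = 1/2`, `z(1/2) = 0`. Then `y(1-t) = 1 - y(t)` and
`z(1-t) = -z(t)` for all `t ∈ I`: the solution is a symmetric solution of σ₁. -/
theorem symmetric_solution_sigma1 (a0 a1 a2 a3 a4 : ℝ) (h34 : a3 = a4)
    (I : Set ℝ) (hIopen : IsOpen I) (hIconn : I.OrdConnected)
    (hIsub : I ⊆ Set.Ioo (0 : ℝ) 1) (hhalf : (1 / 2 : ℝ) ∈ I)
    (hIsymm : ∀ t ∈ I, 1 - t ∈ I)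
    (y z : ℝ → ℝ)
    (hyz : IsRealHamSol a0 a1 a2 a3 a4 I y z)
    (hy0 : y (1 / 2) = 1 / 2) (hz0 : z (1 / 2) = 0) :
    ∀ t ∈ I, y (1 - t) = 1 - y t ∧ z (1 - t) = -z t := by
  subst h34
  set V := sigma1Field a0 a1 a2 a3 a3 with hV
  set f : ℝ → ℝ × ℝ × ℝ := fun t => (t, y t, z t) with hf
  set g : ℝ → ℝ × ℝ × ℝ := fun t => (t, 1 - y (1 - t), -z (1 - t)) with hg
  have hden : ∀ t ∈ I, t * (t - 1) ≠ 0 := by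
    intro t ht
    have h1 := (hIsub ht).1
    have h2 := (hIsub ht).2
    have : t - 1 < 0 := by linarith
    exact mul_ne_zero (ne_of_gt h1) (ne_of_lt this)
  -- f solves the autonomized ODE on I
  have hfD : ∀ t ∈ I, HasDerivAt f (V (f t)) t := by
    intro t ht
    obtain ⟨hy, hz, e1, e2⟩ := hyz t ht
    have hd := hden t ht
    have h1 : HasDerivAt y ((V (f t)).2.1) t := by
      have : deriv y t = (V (f t)).2.1 := by
        simp only [hV, hf, sigma1Field]
        rw [eq_div_iff hd]
        linear_combination e1
      exact this ▸ hy.hasDerivAt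
    have h2 : HasDerivAt z ((V (f t)).2.2) t := by
      have : deriv z t = (V (f t)).2.2 := by
        simp only [hV, hf, sigma1Field]
        rw [eq_div_iff hd]
        linear_combination e2
      exact this ▸ hz.hasDerivAt
    have h0 : (V (f t)).1 = 1 := rfl
    have := (hasDerivAt_id t).prodMk (h1.prodMk h2)
    rw [show ((1 : ℝ), (V (f t)).2.1, (V (f t)).2.2) = V (f t) by rw [← h0]] at this
    exact this
  -- g solves the same ODE on I (this uses a3 = a4)
  have hgD : ∀ t ∈ I, HasDerivAt g (V (g t)) t := by
    intro t ht
    have hs : (1 - t) ∈ I := hIsymm t ht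
    obtain ⟨hy, hz, e1, e2⟩ := hyz (1 - t) hs
    have hd := hden t ht
    have hinner : HasDerivAt (fun t : ℝ => 1 - t) (-1) t := by
      simpa using (hasDerivAt_id t).const_sub 1
    have hyc : HasDerivAt (fun t => y (1 - t)) (deriv y (1 - t) * (-1)) t :=
      HasDerivAt.comp t hy.hasDerivAt hinner
    have hzc : HasDerivAt (fun t => z (1 - t)) (deriv z (1 - t) * (-1)) t :=
      HasDerivAt.comp t hz.hasDerivAt hinner
    have h1 : HasDerivAt (fun t => 1 - y (1 - t)) ((V (g t)).2.1) t := by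
      have := hyc.const_sub 1
      have hval : -(deriv y (1 - t) * (-1)) = (V (g t)).2.1 := by
        simp only [hV, hg, sigma1Field]
        rw [eq_div_iff hd]
        linear_combination e1
      exact hval ▸ this
    have h2 : HasDerivAt (fun t => -z (1 - t)) ((V (g t)).2.2) t := by
      have := hzc.neg
      have hval : -(deriv z (1 - t) * (-1)) = (V (g t)).2.2 := by
        simp only [hV, hg, sigma1Field]
        rw [eq_div_iff hd]
        linear_combination e2
      exact hval ▸ this
    have h0 : (V (g t)).1 = 1 := rfl
    have := (hasDerivAt_id t).prodMk (h1.prodMk h2)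
    rw [show ((1 : ℝ), (V (g t)).2.1, (V (g t)).2.2) = V (g t) by rw [← h0]] at this
    exact this
  have hfc : ∀ t ∈ I, ContinuousAt f t := fun t ht =>
    (hfD t ht).differentiableAt.continuousAt
  have hgc : ∀ t ∈ I, ContinuousAt g t := fun t ht =>
    (hgD t ht).differentiableAt.continuousAt
  -- the agreement set and its complement within I are open
  set S : Set ℝ := {t | f t = g t} with hS
  have hopen1 : IsOpen (I ∩ S) := by
    rw [isOpen_iff_mem_nhds]
    rintro t₀ ⟨ht₀, heq⟩
    have hIn : I ∈ nhds t₀ := hIopen.mem_nhds ht₀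
    obtain ⟨K, s, hsn, hlip⟩ :=
      (sigma1Field_contDiffAt a0 a1 a2 a3 a3 (f t₀) (hden t₀ ht₀)).exists_lipschitzOnWith
    have hvlip : ∀ u : ℝ, LipschitzOnWith K V (s) := fun _ => hlip
    have hfs : f ⁻¹' s ∈ nhds t₀ := (hfc t₀ ht₀).preimage_mem_nhds hsn
    have hgs : g ⁻¹' s ∈ nhds t₀ := by
      have : g t₀ = f t₀ := heq.symm
      exact (hgc t₀ ht₀).preimage_mem_nhds (this ▸ hsn)
    have hfev : ∀ᶠ u in nhds t₀, HasDerivAt f (V (f u)) u ∧ f u ∈ s := by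
      filter_upwards [hIn, hfs] with u hu hu' using ⟨hfD u hu, hu'⟩
    have hgev : ∀ᶠ u in nhds t₀, HasDerivAt g (V (g u)) u ∧ g u ∈ s := by
      filter_upwards [hIn, hgs] with u hu hu' using ⟨hgD u hu, hu'⟩
    have huniq : f =ᶠ[nhds t₀] g :=
      ODE_solution_unique_of_eventually (v := fun _ => V) (s := fun _ => s) (K := K)
        (Filter.Eventually.of_forall hvlip) hfev hgev heq
    filter_upwards [hIn, huniq] with u hu hu' using ⟨hu, hu'⟩
  have hopen2 : IsOpen (I ∩ Sᶜ) := by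
    rw [isOpen_iff_mem_nhds]
    rintro t₀ ⟨ht₀, hne⟩
    have hIn : I ∈ nhds t₀ := hIopen.mem_nhds ht₀
    have hcont : ContinuousAt (fun u => (f u, g u)) t₀ := (hfc t₀ ht₀).prodMk (hgc t₀ ht₀)
    have hdiag : IsOpen {p : (ℝ × ℝ × ℝ) × (ℝ × ℝ × ℝ) | p.1 ≠ p.2} :=
      (isClosed_eq continuous_fst continuous_snd).isOpen_compl
    have hmem : (f t₀, g t₀) ∈ {p : (ℝ × ℝ × ℝ) × (ℝ × ℝ × ℝ) | p.1 ≠ p.2} := hne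
    have := hcont.preimage_mem_nhds (hdiag.mem_nhds hmem)
    filter_upwards [hIn, this] with u hu hu' using ⟨hu, hu'⟩
  -- connectedness argument
  have hsub : I ⊆ I ∩ S := by
    apply IsPreconnected.subset_left_of_subset_union hopen1 hopen2 ?_ ?_ ?_
      hIconn.isPreconnected
    · exact Set.disjoint_left.mpr (fun t h1 h2 => h2.2 h1.2)
    · intro t ht
      by_cases h : f t = g t
      · exact Or.inl ⟨ht, h⟩
      · exact Or.inr ⟨ht, h⟩
    · refine ⟨1/2, hhalf, hhalf, ?_⟩
      show f (1/2) = g (1/2)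
      simp only [hf, hg]
      norm_num [hy0, hz0]
  intro t ht
  have heq : f t = g t := (hsub ht).2
  have h1 : y t = 1 - y (1 - t) := congrArg (fun p => p.2.1) heq
  have h2 : z t = -z (1 - t) := congrArg (fun p => p.2.2) heq
  constructor
  · linarith
  · linarith
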